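/- arXiv:1803.00655 — 2 statements merged into one kernel-verified Lean document; each statement's English description precedes it below -/
import Mathlib

section
/- Let G be a two-player win/lose game with prefix-independent winning condition W, and let V⁻ := V \ (W₀ᵐ(G) ∪ W₁ᵐ(G)). Then for every v ∈ V⁻ there exists u ∈ V⁻ with (v,u) ∈ E. -/
/-- A run in the graph `(V, E)`: an infinite `E`-path. -/
def IsRun {V : Type*} (E : Set (V × V)) (ρ : ℕ → V) : Prop :=
  ∀ n, (ρ n, ρ (n + 1)) ∈ E

/-- A run is compatible with a strategy `σ` of the player controlling `Vi`. -/
def Compatible {V : Type*} (Vi : Set V) (σ : V → V) (ρ : ℕ → V) : Prop :=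
  ∀ n, ρ n ∈ Vi → ρ (n + 1) = σ (ρ n)

/-- A memoryless strategy for the player controlling `Vi` (encoded as a total
function whose values matter only on `Vi`). -/
def IsStrategy {V : Type*} (Vi : Set V) (E : Set (V × V)) (σ : V → V) : Prop :=
  ∀ v ∈ Vi, (v, σ v) ∈ E

/-- The strategy `σ` of the player controlling `Vi` whose winning condition is
`Win` wins from `v`: every compatible run from `v` has its color sequence in `Win`. -/
def WinsFrom {V : Type*} {C : Type*} (Vi : Set V) (E : Set (V × V)) (π : V → C)
    (Win : Set (ℕ → C)) (σ : V → V) (v : V) : Prop :=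
  ∀ ρ : ℕ → V, ρ 0 = v → IsRun E ρ → Compatible Vi σ ρ → (fun n => π (ρ n)) ∈ Win

/-- `Wᵢᵐ(G, σ)`: the vertices from which `σ` wins. -/
def WinRegion {V : Type*} {C : Type*} (Vi : Set V) (E : Set (V × V)) (π : V → C)
    (Win : Set (ℕ → C)) (σ : V → V) : Set V :=
  {v | WinsFrom Vi E π Win σ v}

/-- `Wᵢᵐ(G)`: the vertices from which some memoryless strategy wins. -/
def WinRegionAll {V : Type*} {C : Type*} (Vi : Set V) (E : Set (V × V)) (π : V → C)
    (Win : Set (ℕ → C)) : Set V :=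
  {v | ∃ σ, IsStrategy Vi E σ ∧ WinsFrom Vi E π Win σ v}

/-- Concatenation `w·ρ` of a finite word and an infinite sequence. -/
def ListAppend {C : Type*} (w : List C) (ρ : ℕ → C) : ℕ → C :=
  fun n => if h : n < w.length then w.get ⟨n, h⟩ else ρ (n - w.length)

/-- `W` is prefix-independent: `wρ ∈ W ↔ ρ ∈ W`. -/
def PrefixIndependent {C : Type*} (W : Set (ℕ → C)) : Prop :=
  ∀ (w : List C) (ρ : ℕ → C), ListAppend w ρ ∈ W ↔ ρ ∈ W

/-- Uniform memoryless determinacy of the game `⟨V₀, V₁, E, π, W⟩`. -/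
def UniformlyDetermined {V : Type*} {C : Type*} (V0 V1 : Set V) (E : Set (V × V))
    (π : V → C) (W : Set (ℕ → C)) : Prop :=
  ∃ σ τ, IsStrategy V0 E σ ∧ IsStrategy V1 E τ ∧
    WinRegion V0 E π W σ ∪ WinRegion V1 E π Wᶜ τ = Set.univ

-- tail lemma
lemma tail_win_iff {V C : Type*} {π : V → C} {Win : Set (ℕ → C)}
    (hW : PrefixIndependent Win) (ρ : ℕ → V) (N : ℕ) :
    (fun n => π (ρ n)) ∈ Win ↔ (fun n => π (ρ (n + N))) ∈ Win := by
  have key : (fun n => π (ρ n)) =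
      ListAppend (List.ofFn fun i : Fin N => π (ρ i)) (fun n => π (ρ (n + N))) := by
    funext n
    simp only [ListAppend, List.length_ofFn]
    rcases Nat.lt_or_ge n N with h' | h'
    · rw [dif_pos h']; simp [List.get_ofFn]
    · rw [dif_neg (by omega)]
      congr 2
      omega
  rw [key, hW]

-- one-step closure of winning
lemma winsFrom_step {V C : Type*} {Vi : Set V} {E : Set (V × V)} {π : V → C}
    {Win : Set (ℕ → C)} (hW : PrefixIndependent Win) {σ : V → V} {x y : V}
    (hx : WinsFrom Vi E π Win σ x) (hxy : (x, y) ∈ E) (hcomp : x ∈ Vi → y = σ x) :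
    WinsFrom Vi E π Win σ y := by
  intro ρ h0 hrun hc
  set ρ' : ℕ → V := fun n => if n = 0 then x else ρ (n - 1) with hρ'
  have hrun' : IsRun E ρ' := by
    intro n
    cases n with
    | zero => simpa [hρ', h0] using hxy
    | succ m => simpa [hρ'] using hrun m
  have hc' : Compatible Vi σ ρ' := by
    intro n hn
    cases n with
    | zero =>
        simp only [hρ', if_pos rfl] at hn ⊢
        simpa [h0] using hcomp hn
    | succ m => simpa [hρ'] using hc m (by simpa [hρ'] using hn)
  have hmem := hx ρ' (by simp [hρ']) hrun' hc'
  have : (fun n => π (ρ n)) = fun n => π (ρ' (n + 1)) := by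
    funext n; simp [hρ']
  rw [this]
  exact (tail_win_iff hW ρ' 1).mp hmem

-- skipping a prefix of a run
lemma winsFrom_of_tail {V C : Type*} {Vi : Set V} {E : Set (V × V)} {π : V → C}
    {Win : Set (ℕ → C)} (hW : PrefixIndependent Win) {σ : V → V}
    {ρ : ℕ → V} (hrun : IsRun E ρ) (hc : Compatible Vi σ ρ)
    (hwin : WinsFrom Vi E π Win σ (ρ 1)) : (fun n => π (ρ n)) ∈ Win := by
  have h1 := hwin (fun n => ρ (n + 1)) rfl (fun n => hrun (n + 1)) (fun n hn => hc (n + 1) hn)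
  exact (tail_win_iff hW ρ 1).mpr h1

-- uniformization of memoryless winning strategies
lemma uniform_strategy {V C : Type*} (Vi : Set V) (E : Set (V × V)) (π : V → C)
    (Win : Set (ℕ → C)) (hE : ∀ v : V, ∃ u, (v, u) ∈ E)
    (hW : PrefixIndependent Win) :
    ∃ σ, IsStrategy Vi E σ ∧
      ∀ v ∈ WinRegionAll Vi E π Win, WinsFrom Vi E π Win σ v := by
  classical
  have wo : IsWellOrder (V → V) WellOrderingRel := WellOrderingRel.isWellOrder
  have wf : WellFounded (WellOrderingRel (α := V → V)) := wo.toIsWellFounded.wf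
  set S : V → Set (V → V) :=
    fun v => {σ | IsStrategy Vi E σ ∧ WinsFrom Vi E π Win σ v} with hS
  set g : V → (V → V) := fun v => if h : (S v).Nonempty then wf.min (S v) h else id with hg
  have hgmem : ∀ v, (S v).Nonempty → g v ∈ S v := by
    intro v h; simp only [hg, dif_pos h]; exact wf.min_mem _ h
  have hgmin : ∀ v (h : (S v).Nonempty), ∀ τ ∈ S v, ¬ WellOrderingRel τ (g v) := by
    intro v h τ hτ; simp only [hg, dif_pos h]; exact wf.not_lt_min _ hτ
  set σ' : V → V := fun v => if (S v).Nonempty then g v v else Classical.choose (hE v) with hσ'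
  refine ⟨σ', ?_, ?_⟩
  · intro v hv
    by_cases h : (S v).Nonempty
    · have := (hgmem v h).1 v hv
      simpa [hσ', if_pos h] using this
    · simpa [hσ', if_neg h] using Classical.choose_spec (hE v)
  · rintro v ⟨τ, hτs, hτw⟩ ρ h0 hrun hc
    have hSv : (S v).Nonempty := ⟨τ, hτs, hτw⟩
    -- invariant along the run
    have inv : ∀ n, (S (ρ n)).Nonempty ∧ WinsFrom Vi E π Win (g (ρ n)) (ρ n) := by
      intro n
      induction n with
      | zero =>
          refine ⟨by rwa [h0], ?_⟩
          have := (hgmem v hSv).2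
          rwa [h0]
      | succ m ih =>
          obtain ⟨hne, hwin⟩ := ih
          have hstep : WinsFrom Vi E π Win (g (ρ m)) (ρ (m + 1)) := by
            refine winsFrom_step hW hwin (hrun m) ?_
            intro hv
            rw [hc m hv]
            simp [hσ', if_pos hne]
          have hmem : g (ρ m) ∈ S (ρ (m + 1)) := ⟨(hgmem _ hne).1, hstep⟩
          have hne' : (S (ρ (m + 1))).Nonempty := ⟨_, hmem⟩
          exact ⟨hne', (hgmem _ hne').2⟩
    -- the value g (ρ n) is non-increasing, hence stabilizes
    have hmono : ∀ n, ¬ WellOrderingRel (g (ρ n)) (g (ρ (n + 1))) := by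
      intro n
      have hne := (inv n).1
      have hstep : WinsFrom Vi E π Win (g (ρ n)) (ρ (n + 1)) := by
        refine winsFrom_step hW (inv n).2 (hrun n) ?_
        intro hv; rw [hc n hv]; simp [hσ', if_pos hne]
      exact hgmin _ (inv (n+1)).1 _ ⟨(hgmem _ hne).1, hstep⟩
    obtain ⟨x, ⟨N, hN⟩, hxmin⟩ :=
      wf.has_min (Set.range fun n => g (ρ n)) ⟨g (ρ 0), 0, rfl⟩
    have hstab : ∀ n, N ≤ n → g (ρ n) = x := by
      intro n hn
      induction n with
      | zero =>
          have hN0 : N = 0 := Nat.le_zero.mp hn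
          subst hN0; exact hN
      | succ m ih =>
          rcases Nat.lt_or_ge m N with h | h
          · have : N = m + 1 := by omega
            rw [← this]; exact hN
          · have hm := ih h
            have h1 : ¬ WellOrderingRel x (g (ρ (m + 1))) := hm ▸ hmono m
            have h2 : ¬ WellOrderingRel (g (ρ (m + 1))) x := hxmin _ ⟨m + 1, rfl⟩
            exact wo.trichotomous (g (ρ (m + 1))) x h2 h1
    have hxwin : WinsFrom Vi E π Win x (ρ N) := by
      have := (inv N).2
      rwa [hstab N le_rfl] at this
    have htail := hxwin (fun k => ρ (k + N)) (by simp)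
      (fun k => by
        have := hrun (k + N)
        rwa [show k + N + 1 = k + 1 + N by omega] at this)
      (fun k hk => by
        have h1 := hc (k + N) hk
        have h2 : σ' (ρ (k + N)) = x (ρ (k + N)) := by
          simp only [hσ', if_pos (inv (k + N)).1]
          rw [hstab (k + N) (by omega)]
        show ρ (k + 1 + N) = x (ρ (k + N))
        rw [show k + 1 + N = k + N + 1 by omega, h1, h2])
    exact (tail_win_iff hW ρ N).mpr htail

-- the owner of `v` can extend a winning strategy of a successor to `v`
lemma extend_own {V C : Type*} {Vi : Set V} {E : Set (V × V)} {π : V → C}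
    {Win : Set (ℕ → C)} (hW : PrefixIndependent Win) {v u : V}
    (hv : v ∈ Vi) (hvu : (v, u) ∈ E)
    (hu : u ∈ WinRegionAll Vi E π Win) : v ∈ WinRegionAll Vi E π Win := by
  classical
  by_cases hvW : v ∈ WinRegionAll Vi E π Win
  · exact hvW
  obtain ⟨σ, hσs, hσw⟩ := hu
  refine ⟨Function.update σ v u, ?_, ?_⟩
  · intro x hx
    by_cases hx' : x = v
    · subst hx'; simpa using hvu
    · simpa [Function.update_of_ne hx'] using hσs x hx
  · intro ρ h0 hrun hc
    have hρ1 : ρ 1 = u := by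
      have h := hc 0 (h0 ▸ hv)
      rw [h0] at h
      simpa using h
    by_cases hrev : ∃ m, 1 ≤ m ∧ ρ m = v
    · exfalso
      apply hvW
      have hm0spec := Nat.find_spec hrev
      set m0 := Nat.find hrev with hm0
      have hm0min : ∀ k, k < m0 → ¬ (1 ≤ k ∧ ρ k = v) := fun k hk => Nat.find_min hrev hk
      have key : ∀ n, 1 ≤ n → n ≤ m0 → WinsFrom Vi E π Win σ (ρ n) := by
        intro n
        induction n with
        | zero => omega
        | succ k ih =>
            intro _ hle
            rcases Nat.eq_zero_or_pos k with hk0 | hk1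
            · subst hk0; rw [hρ1]; exact hσw
            · have hwk := ih hk1 (by omega)
              refine winsFrom_step hW hwk (hrun k) ?_
              intro hkVi
              have hne : ρ k ≠ v := fun hkv => hm0min k (by omega) ⟨hk1, hkv⟩
              rw [hc k hkVi, Function.update_of_ne hne]
      exact ⟨σ, hσs, hm0spec.2 ▸ key m0 hm0spec.1 le_rfl⟩
    · push_neg at hrev
      have hcomp : Compatible Vi σ (fun n => ρ (n + 1)) := by
        intro n hn
        have h := hc (n + 1) hn
        show ρ (n + 1 + 1) = σ (ρ (n + 1))
        rw [h, Function.update_of_ne (hrev (n + 1) (by omega))]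
      have h1 := hσw (fun n => ρ (n + 1)) (by simpa using hρ1)
        (fun n => hrun (n + 1)) hcomp
      exact (tail_win_iff hW ρ 1).mpr h1

-- at an opponent vertex, if the strategy wins from every successor it wins here
lemma extend_opp {V C : Type*} {Vi : Set V} {E : Set (V × V)} {π : V → C}
    {Win : Set (ℕ → C)} (hW : PrefixIndependent Win) {σ : V → V} {v : V}
    (hsucc : ∀ u, (v, u) ∈ E → WinsFrom Vi E π Win σ u) :
    WinsFrom Vi E π Win σ v := by
  intro ρ h0 hrun hc
  have h1 : (v, ρ 1) ∈ E := h0 ▸ hrun 0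
  exact winsFrom_of_tail hW hrun hc (hsucc (ρ 1) h1)


/-- every vertex of `V⁻ = V \ (W₀ᵐ(G) ∪ W₁ᵐ(G))` has a successor
in `V⁻`. -/
theorem stmt9 {V C : Type*} [Nonempty C]
    (V0 V1 : Set V) (E : Set (V × V)) (π : V → C) (W : Set (ℕ → C))
    (hdisj : Disjoint V0 V1) (hcover : V0 ∪ V1 = Set.univ)
    (hE : ∀ v : V, ∃ u, (v, u) ∈ E)
    (hW : PrefixIndependent W)
    (Vm : Set V)
    (hVm : Vm = (WinRegionAll V0 E π W ∪ WinRegionAll V1 E π Wᶜ)ᶜ) :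
    ∀ v ∈ Vm, ∃ u ∈ Vm, (v, u) ∈ E := by
  classical
  intro v hv
  by_contra hcon
  push_neg at hcon
  have hWc : PrefixIndependent Wᶜ := fun w ρ => not_iff_not.mpr (hW w ρ)
  obtain ⟨σ0, hσ0s, hσ0w⟩ := uniform_strategy V0 E π W hE hW
  obtain ⟨τ1, hτ1s, hτ1w⟩ := uniform_strategy V1 E π Wᶜ hE hWc
  rw [hVm] at hv
  have hv0 : v ∉ WinRegionAll V0 E π W := fun h => hv (Or.inl h)
  have hv1 : v ∉ WinRegionAll V1 E π Wᶜ := fun h => hv (Or.inr h)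
  have hsucc : ∀ u, (v, u) ∈ E →
      u ∈ WinRegionAll V0 E π W ∪ WinRegionAll V1 E π Wᶜ := by
    intro u hu
    by_contra h
    exact hcon u (by rw [hVm]; exact h) hu
  have hvV : v ∈ V0 ∪ V1 := by rw [hcover]; trivial
  rcases hvV with h0 | h1
  · by_cases hex : ∃ u, (v, u) ∈ E ∧ u ∈ WinRegionAll V0 E π W
    · obtain ⟨u, hu1, hu2⟩ := hex
      exact hv0 (extend_own hW h0 hu1 hu2)
    · push_neg at hex
      apply hv1
      refine ⟨τ1, hτ1s, extend_opp hWc ?_⟩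
      intro u hu
      rcases hsucc u hu with h | h
      · exact absurd h (hex u hu)
      · exact hτ1w u h
  · by_cases hex : ∃ u, (v, u) ∈ E ∧ u ∈ WinRegionAll V1 E π Wᶜ
    · obtain ⟨u, hu1, hu2⟩ := hex
      exact hv1 (extend_own hWc h1 hu1 hu2)
    · push_neg at hex
      apply hv0
      refine ⟨σ0, hσ0s, extend_opp hW ?_⟩
      intro u hu
      rcases hsucc u hu with h | h
      · exact hσ0w u h
      · exact absurd h (hex u hu)
end

section
/- Let G be a two-player win/lose game with prefix-independent winning condition W, let V⁻ := V \ (W₀ᵐ(G) ∪ W₁ᵐ(G)) be nonempty, and let G⁻ := ⟨V₀ ∩ V⁻, V₁ ∩ V⁻, E ∩ (V⁻ × V⁻), C, π|_{V⁻}, W⟩ be the restriction of G to V⁻. Then G⁻ is a well-defined game (every vertex of V⁻ has an outgoing edge within V⁻), Wᵢᵐ(G⁻) ⊆ Wᵢᵐ(G) for i = 0,1, and consequently W₀ᵐ(G⁻) ∪ W₁ᵐ(G⁻) = ∅. -/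
section Aux

variable {V : Type*} {C : Type*}

lemma prefixIndependent_shift {W : Set (ℕ → C)} (hW : PrefixIndependent W)
    (f : ℕ → C) (N : ℕ) : (fun n => f (n + N)) ∈ W ↔ f ∈ W := by
  have he : ListAppend (List.ofFn (fun i : Fin N => f i)) (fun n => f (n + N)) = f := by
    funext n
    simp only [ListAppend, List.length_ofFn]
    split_ifs with hn
    · simp
    · congr 1; omega
  have h := hW (List.ofFn (fun i : Fin N => f i)) (fun n => f (n + N))
  rw [he] at h
  exact h.symm

lemma PrefixIndependent.compl' {W : Set (ℕ → C)} (hW : PrefixIndependent W) :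
    PrefixIndependent Wᶜ := fun w ρ => by
  simp only [Set.mem_compl_iff]
  exact not_congr (hW w ρ)

lemma winsFrom_step_s11 {Vi : Set V} {E : Set (V × V)} {π : V → C} {W : Set (ℕ → C)}
    (hW : PrefixIndependent W) {σ : V → V} {w u : V}
    (hwin : WinsFrom Vi E π W σ w) (he : (w, u) ∈ E) (hc : w ∈ Vi → u = σ w) :
    WinsFrom Vi E π W σ u := by
  intro ρ h0 hrun hcomp
  have h1 : (fun n => π ((fun m => match m with | 0 => w | Nat.succ k => ρ k) n)) ∈ W := by
    refine hwin _ rfl (fun n => ?_) (fun n hn => ?_)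
    · match n with
      | 0 => show (w, ρ 0) ∈ E; rw [h0]; exact he
      | Nat.succ k => exact hrun k
    · match n with
      | 0 => show ρ 0 = σ w; rw [h0]; exact hc hn
      | Nat.succ k => exact hcomp k hn
  exact (prefixIndependent_shift hW _ 1).mpr h1

lemma exists_uniform {Vi : Set V} {E : Set (V × V)} {π : V → C} {W : Set (ℕ → C)}
    (hW : PrefixIndependent W) (hE : ∀ v, ∃ u, (v, u) ∈ E) :
    ∃ σ, IsStrategy Vi E σ ∧ ∀ v ∈ WinRegionAll Vi E π W, WinsFrom Vi E π W σ v := by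
  classical
  have wf : WellFounded (WellOrderingRel : (V → V) → (V → V) → Prop) := IsWellFounded.wf
  set R := WinRegionAll Vi E π W with hR
  set Good : V → Set (V → V) := fun w => {s | IsStrategy Vi E s ∧ WinsFrom Vi E π W s w}
    with hGood
  have hGoodne : ∀ w, w ∈ R → (Good w).Nonempty := fun w hw => hw
  set g : V → (V → V) := fun w =>
    if h : w ∈ R then wf.min (Good w) (hGoodne w h) else id with hg
  have hgmem : ∀ w ∈ R, g w ∈ Good w := by
    intro w hw; simp only [hg, dif_pos hw]; exact wf.min_mem _ _
  have hgmin : ∀ w ∈ R, ∀ s ∈ Good w, ¬ WellOrderingRel s (g w) := by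
    intro w hw s hs; simp only [hg, dif_pos hw]; exact wf.not_lt_min _ hs
  set σ : V → V := fun w => if h : w ∈ R then g w w else Classical.choose (hE w) with hσ
  refine ⟨σ, ?_, ?_⟩
  · intro v hv
    by_cases h : v ∈ R
    · simp only [hσ, dif_pos h]; exact (hgmem v h).1 v hv
    · simp only [hσ, dif_neg h]; exact Classical.choose_spec (hE v)
  · intro v hv ρ h0 hrun hcomp
    have hmem : ∀ n, ρ n ∈ R := by
      intro n; induction n with
      | zero => rw [h0]; exact hv
      | succ k ih =>
        refine ⟨g (ρ k), (hgmem _ ih).1, ?_⟩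
        refine winsFrom_step_s11 hW (hgmem _ ih).2 (hrun k) (fun hk => ?_)
        rw [hcomp k hk]; simp only [hσ, dif_pos ih]
    have hstepwin : ∀ n, g (ρ n) ∈ Good (ρ (n + 1)) := by
      intro n
      refine ⟨(hgmem _ (hmem n)).1, ?_⟩
      refine winsFrom_step_s11 hW (hgmem _ (hmem n)).2 (hrun n) (fun hk => ?_)
      rw [hcomp n hk]; simp only [hσ, dif_pos (hmem n)]
    have hmono : ∀ n, ¬ WellOrderingRel (g (ρ n)) (g (ρ (n + 1))) :=
      fun n => hgmin _ (hmem (n + 1)) _ (hstepwin n)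
    have hrange : (Set.range fun n => g (ρ n)).Nonempty := ⟨g (ρ 0), 0, rfl⟩
    obtain ⟨N, hN⟩ := wf.min_mem _ hrange
    have hnm : ∀ n, ¬ WellOrderingRel (g (ρ n)) (wf.min _ hrange) :=
      fun n => wf.not_lt_min (Set.range fun n => g (ρ n)) ⟨n, rfl⟩
    have hconst : ∀ k, g (ρ (k + N)) = g (ρ N) := by
      intro k; induction k with
      | zero => rw [Nat.zero_add]
      | succ k ih =>
        have e : k + 1 + N = (k + N) + 1 := by omega
        rw [e]
        have h1 : ¬ WellOrderingRel (g (ρ N)) (g (ρ (k + N + 1))) := by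
          have := hmono (k + N); rwa [ih] at this
        rcases trichotomous_of WellOrderingRel (g (ρ (k + N + 1))) (g (ρ N)) with h | h | h
        · have hb := hnm (k + N + 1)
          rw [← hN] at hb
          exact absurd h hb
        · exact h
        · exact absurd h h1
    have htail : (fun k => π (ρ (k + N))) ∈ W := by
      refine (hgmem _ (hmem N)).2 (fun k => ρ (k + N)) (show ρ (0 + N) = ρ N by rw [Nat.zero_add])
        (fun k => ?_) (fun k hk => ?_)
      · show (ρ (k + N), ρ (k + 1 + N)) ∈ E
        have e : k + 1 + N = (k + N) + 1 := by omega
        rw [e]; exact hrun (k + N)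
      · show ρ (k + 1 + N) = g (ρ N) (ρ (k + N))
        have e : k + 1 + N = (k + N) + 1 := by omega
        rw [e, hcomp (k + N) hk, ← hconst k]
        simp only [hσ, dif_pos (hmem (k + N))]
    exact (prefixIndependent_shift hW _ N).mp htail

lemma mem_region_of_edge {Vi : Set V} {E : Set (V × V)} {π : V → C} {W : Set (ℕ → C)}
    (hW : PrefixIndependent W) (hE : ∀ v, ∃ u, (v, u) ∈ E) {v u : V}
    (hv : v ∈ Vi) (he : (v, u) ∈ E) (hu : u ∈ WinRegionAll Vi E π W) :
    v ∈ WinRegionAll Vi E π W := by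
  classical
  by_cases hvR : v ∈ WinRegionAll Vi E π W
  · exact hvR
  obtain ⟨σ, hσs, hσw⟩ := exists_uniform (Vi := Vi) (π := π) hW hE
  set σ' := Function.update σ v u with hσ'
  refine ⟨σ', ?_, ?_⟩
  · intro w hw
    by_cases hwv : w = v
    · subst hwv; rw [hσ', Function.update_self]; exact he
    · rw [hσ', Function.update_of_ne hwv]; exact hσs w hw
  · intro ρ h0 hrun hcomp
    have h1 : ρ 1 = u := by
      have := hcomp 0 (by rw [h0]; exact hv)
      rw [h0] at this
      rw [this, hσ', Function.update_self]
    have hmem : ∀ k, ρ (k + 1) ∈ WinRegionAll Vi E π W := by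
      intro k; induction k with
      | zero => rw [show ρ (0 + 1) = u from h1]; exact hu
      | succ k ih =>
        have hne : ρ (k + 1) ≠ v := fun hh => hvR (hh ▸ ih)
        refine ⟨σ, hσs, ?_⟩
        refine winsFrom_step_s11 hW (hσw _ ih) (hrun (k + 1)) (fun hk => ?_)
        rw [hcomp (k + 1) hk, hσ', Function.update_of_ne hne]
    have htail : (fun k => π (ρ (k + 1))) ∈ W := by
      refine hσw u hu (fun k => ρ (k + 1)) h1 (fun k => hrun (k + 1)) (fun k hk => ?_)
      have hne : ρ (k + 1) ≠ v := fun hh => hvR (hh ▸ hmem k)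
      show ρ (k + 1 + 1) = σ (ρ (k + 1))
      rw [hcomp (k + 1) hk, hσ', Function.update_of_ne hne]
    exact (prefixIndependent_shift hW _ 1).mp htail

lemma mem_region_of_forced {Vopp : Set V} {E : Set (V × V)} {π : V → C} {W' : Set (ℕ → C)}
    (hW' : PrefixIndependent W') (hE : ∀ v, ∃ u, (v, u) ∈ E) {v : V}
    (hall : ∀ u, (v, u) ∈ E → u ∈ WinRegionAll Vopp E π W') :
    v ∈ WinRegionAll Vopp E π W' := by
  obtain ⟨τ, hτs, hτw⟩ := exists_uniform (Vi := Vopp) (π := π) hW' hE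
  refine ⟨τ, hτs, ?_⟩
  intro ρ h0 hrun hcomp
  have h1 : ρ 1 ∈ WinRegionAll Vopp E π W' := by
    refine hall _ ?_
    have := hrun 0
    rwa [h0] at this
  have htail : (fun k => π (ρ (k + 1))) ∈ W' :=
    hτw (ρ 1) h1 (fun k => ρ (k + 1)) rfl (fun k => hrun (k + 1))
      (fun k hk => hcomp (k + 1) hk)
  exact (prefixIndependent_shift hW' _ 1).mp htail

lemma lift_region {V0' V1' : Set V} {E : Set (V × V)} {π : V → C} {W0' W1' : Set (ℕ → C)}
    (hW0 : PrefixIndependent W0') (hW1 : PrefixIndependent W1')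
    (hE : ∀ v, ∃ u, (v, u) ∈ E)
    (hcov : ∀ v, v ∈ V0' ∨ v ∈ V1')
    (Vm : Set V) (hVm : Vm = (WinRegionAll V0' E π W0' ∪ WinRegionAll V1' E π W1')ᶜ) :
    Subtype.val '' WinRegionAll {x : ↥Vm | x.val ∈ V0'}
        {p : ↥Vm × ↥Vm | (p.1.val, p.2.val) ∈ E} (fun x : ↥Vm => π x.val) W0'
      ⊆ WinRegionAll V0' E π W0' := by
  classical
  set R0 := WinRegionAll V0' E π W0' with hR0
  set R1 := WinRegionAll V1' E π W1' with hR1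
  have hVm' : ∀ w, w ∈ Vm ↔ w ∉ R0 ∪ R1 := fun w => by rw [hVm]; exact Iff.rfl
  rintro _ ⟨x, hx, rfl⟩
  obtain ⟨σm, hσms, hσmw⟩ := hx
  obtain ⟨σ0, hσ0s, hσ0w⟩ := exists_uniform (Vi := V0') (π := π) hW0 hE
  set σ : V → V := fun w =>
    if h : w ∈ Vm then (σm ⟨w, h⟩).val
    else if w ∈ R0 then σ0 w else Classical.choose (hE w) with hσ
  refine ⟨σ, ?_, ?_⟩
  · intro w hw
    by_cases h : w ∈ Vm
    · simp only [hσ, dif_pos h]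
      exact hσms ⟨w, h⟩ hw
    · simp only [hσ, dif_neg h]
      split_ifs with h2
      · exact hσ0s w hw
      · exact Classical.choose_spec (hE w)
  · intro ρ h0 hrun hcomp
    have hstep0 : ∀ k, ρ k ∈ R0 → ρ (k + 1) ∈ R0 := by
      intro k hk
      refine ⟨σ0, hσ0s, ?_⟩
      refine winsFrom_step_s11 hW0 (hσ0w _ hk) (hrun k) (fun hvi => ?_)
      rw [hcomp k hvi]
      have hkm : ρ k ∉ Vm := fun hh => (hVm' _).mp hh (Or.inl hk)
      simp only [hσ, dif_neg hkm, if_pos hk]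
    have hinv : ∀ n, ρ n ∈ Vm ∨ ρ n ∈ R0 := by
      intro n; induction n with
      | zero => left; rw [h0]; exact x.2
      | succ k ih =>
        rcases ih with hk | hk
        · rcases hcov (ρ k) with hk0 | hk1
          · left
            rw [hcomp k hk0]
            simp only [hσ, dif_pos hk]
            exact (σm ⟨ρ k, hk⟩).2
          · by_cases hnext : ρ (k + 1) ∈ Vm
            · exact Or.inl hnext
            by_cases hnext0 : ρ (k + 1) ∈ R0
            · exact Or.inr hnext0
            exfalso
            have hmem1 : ρ (k + 1) ∈ R1 := by
              have h' : ρ (k + 1) ∈ R0 ∪ R1 := by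
                by_contra hc
                exact hnext ((hVm' _).mpr hc)
              exact h'.resolve_left hnext0
            have : ρ k ∈ R1 := mem_region_of_edge hW1 hE hk1 (hrun k) hmem1
            exact (hVm' _).mp hk (Or.inr this)
        · exact Or.inr (hstep0 k hk)
    by_cases hR0hit : ∃ N, ρ N ∈ R0
    · obtain ⟨N, hN⟩ := hR0hit
      have hstay : ∀ k, ρ (k + N) ∈ R0 := by
        intro k; induction k with
        | zero => rw [Nat.zero_add]; exact hN
        | succ k ih =>
          have e : k + 1 + N = (k + N) + 1 := by omega
          rw [e]
          exact hstep0 _ ih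
      have htail : (fun k => π (ρ (k + N))) ∈ W0' := by
        refine hσ0w (ρ N) hN (fun k => ρ (k + N)) (show ρ (0 + N) = ρ N by rw [Nat.zero_add])
          (fun k => ?_) (fun k hk => ?_)
        · show (ρ (k + N), ρ (k + 1 + N)) ∈ E
          have e : k + 1 + N = (k + N) + 1 := by omega
          rw [e]; exact hrun (k + N)
        · show ρ (k + 1 + N) = σ0 (ρ (k + N))
          have e : k + 1 + N = (k + N) + 1 := by omega
          rw [e, hcomp (k + N) hk]
          have hkm : ρ (k + N) ∉ Vm := fun hh => (hVm' _).mp hh (Or.inl (hstay k))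
          simp only [hσ, dif_neg hkm, if_pos (hstay k)]
      exact (prefixIndependent_shift hW0 _ N).mp htail
    · push_neg at hR0hit
      have hmemVm : ∀ n, ρ n ∈ Vm := fun n => (hinv n).resolve_right (hR0hit n)
      have := hσmw (fun n => (⟨ρ n, hmemVm n⟩ : ↥Vm)) (Subtype.ext h0)
        (fun n => hrun n) (fun n hn => Subtype.ext (by
          show ρ (n + 1) = ((σm ⟨ρ n, hmemVm n⟩ : ↥Vm) : V)
          rw [hcomp n hn]
          simp only [hσ, dif_pos (hmemVm n)]))
      exact this

end Aux

/-- the restriction `G⁻` of `G` to `V⁻ = V \ (W₀ᵐ(G) ∪ W₁ᵐ(G))`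
is a well-defined game, its memoryless winning regions are included in those of
`G`, and hence both are empty. -/
theorem stmt11 {V C : Type*} [Nonempty C]
    (V0 V1 : Set V) (E : Set (V × V)) (π : V → C) (W : Set (ℕ → C))
    (hdisj : Disjoint V0 V1) (hcover : V0 ∪ V1 = Set.univ)
    (hE : ∀ v : V, ∃ u, (v, u) ∈ E)
    (hW : PrefixIndependent W)
    (Vm : Set V)
    (hVm : Vm = (WinRegionAll V0 E π W ∪ WinRegionAll V1 E π Wᶜ)ᶜ)
    (hne : Vm.Nonempty) :
    (∀ v ∈ Vm, ∃ u ∈ Vm, (v, u) ∈ E) ∧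
    (Subtype.val '' WinRegionAll {x : ↥Vm | x.val ∈ V0}
        {p : ↥Vm × ↥Vm | (p.1.val, p.2.val) ∈ E} (fun x : ↥Vm => π x.val) W
      ⊆ WinRegionAll V0 E π W) ∧
    (Subtype.val '' WinRegionAll {x : ↥Vm | x.val ∈ V1}
        {p : ↥Vm × ↥Vm | (p.1.val, p.2.val) ∈ E} (fun x : ↥Vm => π x.val) Wᶜ
      ⊆ WinRegionAll V1 E π Wᶜ) ∧
    (WinRegionAll {x : ↥Vm | x.val ∈ V0}
        {p : ↥Vm × ↥Vm | (p.1.val, p.2.val) ∈ E} (fun x : ↥Vm => π x.val) W ∪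
     WinRegionAll {x : ↥Vm | x.val ∈ V1}
        {p : ↥Vm × ↥Vm | (p.1.val, p.2.val) ∈ E} (fun x : ↥Vm => π x.val) Wᶜ
      = ∅) := by
  classical
  have hWc : PrefixIndependent Wᶜ := hW.compl'
  have hcov0 : ∀ v, v ∈ V0 ∨ v ∈ V1 := by
    intro v
    have h : v ∈ V0 ∪ V1 := by rw [hcover]; exact Set.mem_univ v
    exact h
  have hVm' : ∀ w, w ∈ Vm ↔ w ∉ WinRegionAll V0 E π W ∪ WinRegionAll V1 E π Wᶜ :=
    fun w => by rw [hVm]; exact Iff.rfl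
  have part1 : ∀ v ∈ Vm, ∃ u ∈ Vm, (v, u) ∈ E := by
    intro v hv
    by_contra hno
    push_neg at hno
    have hall : ∀ u, (v, u) ∈ E → u ∈ WinRegionAll V0 E π W ∪ WinRegionAll V1 E π Wᶜ := by
      intro u hu
      by_contra hc
      exact hno u ((hVm' u).mpr hc) hu
    rcases hcov0 v with hv0 | hv1
    · by_cases hex0 : ∃ u, (v, u) ∈ E ∧ u ∈ WinRegionAll V0 E π W
      · obtain ⟨u, hu1, hu2⟩ := hex0
        exact (hVm' v).mp hv (Or.inl (mem_region_of_edge hW hE hv0 hu1 hu2))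
      · push_neg at hex0
        have hall1 : ∀ u, (v, u) ∈ E → u ∈ WinRegionAll V1 E π Wᶜ :=
          fun u hu => (hall u hu).resolve_left (hex0 u hu)
        exact (hVm' v).mp hv (Or.inr (mem_region_of_forced hWc hE hall1))
    · by_cases hex1 : ∃ u, (v, u) ∈ E ∧ u ∈ WinRegionAll V1 E π Wᶜ
      · obtain ⟨u, hu1, hu2⟩ := hex1
        exact (hVm' v).mp hv (Or.inr (mem_region_of_edge hWc hE hv1 hu1 hu2))
      · push_neg at hex1
        have hall0 : ∀ u, (v, u) ∈ E → u ∈ WinRegionAll V0 E π W :=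
          fun u hu => (hall u hu).resolve_right (hex1 u hu)
        exact (hVm' v).mp hv (Or.inl (mem_region_of_forced hW hE hall0))
  have h2 := lift_region hW hWc hE hcov0 Vm hVm
  have hVm1 : Vm = (WinRegionAll V1 E π Wᶜ ∪ WinRegionAll V0 E π W)ᶜ := by
    rw [hVm, Set.union_comm]
  have h3 := lift_region hWc hW hE (fun v => (hcov0 v).symm) Vm hVm1
  refine ⟨part1, h2, h3, ?_⟩
  apply Set.eq_empty_iff_forall_notMem.mpr
  intro x hx
  rcases hx with hx0 | hx1
  · exact (hVm' x.val).mp x.2 (Or.inl (h2 ⟨x, hx0, rfl⟩))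
  · exact (hVm' x.val).mp x.2 (Or.inr (h3 ⟨x, hx1, rfl⟩))
end
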